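/- Let F ⊂ ℤ be finite with 0 ∈ F, and let A ⊂ ℤ be such that 𝟙_F * 𝟙_A is ℓℤ-periodic for some ℓ ≥ 1. Let q be the least common multiple of ℓ and all primes ≤ 2|F|, and let n be the least common multiple of |f| over f ∈ F \ {0}. Then A is qn·ℤ-periodic, i.e., A + qn = A. -/

import Mathlib

open Polynomial IntermediateField

lemma int_of_pow_eq_one (z : ℂ) (t : ℕ) (ht : t ≠ 0) (hz : z ^ t = 1) : IsIntegral ℚ z := by
  refine ⟨X ^ t - 1, ?_, ?_⟩
  · exact monic_X_pow_sub_C 1 ht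
  · simp [eval₂_sub, hz]

lemma minpoly_eq_cyclo (s p k m : ℕ) (hp : p.Prime) (hs : s = p ^ k * m)
    (hm : ¬ p ∣ m) (hs0 : s ≠ 0) (ω : ℂ) (hω : IsPrimitiveRoot ω s) :
    minpoly (ℚ⟮(ω ^ (p ^ k) : ℂ)⟯) ((ω ^ m : ℂ)) =
      cyclotomic (p ^ k) (ℚ⟮(ω ^ (p ^ k) : ℂ)⟯) := by
  have hm0 : m ≠ 0 := by rintro rfl; simp at hs; exact hs0 hs
  have hpk0 : p ^ k ≠ 0 := pow_ne_zero _ hp.pos.ne'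
  have hspos : 0 < s := Nat.pos_of_ne_zero hs0
  have hζ₁ : IsPrimitiveRoot (ω ^ m) (p ^ k) := hω.pow hspos (by rw [hs, mul_comm])
  have hη : IsPrimitiveRoot (ω ^ (p ^ k)) m := hω.pow hspos hs
  have hcop : Nat.Coprime (p ^ k) m := (Nat.Prime.coprime_iff_not_dvd hp).mpr hm |>.pow_left _
  set η : ℂ := ω ^ (p ^ k) with hηdef
  set ζ₁ : ℂ := ω ^ m with hζdef
  have hintω : IsIntegral ℚ ω := int_of_pow_eq_one ω s hs0 (hω.pow_eq_one)
  have hintη : IsIntegral ℚ η := int_of_pow_eq_one η m hm0 (hη.pow_eq_one)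
  have hintζ : IsIntegral ℚ ζ₁ := int_of_pow_eq_one ζ₁ (p^k) hpk0 (hζ₁.pow_eq_one)
  have hω0 : ω ≠ 0 := hω.ne_zero hs0
  -- finranks over ℚ
  have hfrω : Module.finrank ℚ ℚ⟮ω⟯ = Nat.totient s := by
    rw [adjoin.finrank hintω, ← cyclotomic_eq_minpoly_rat hω hspos, natDegree_cyclotomic]
  have hfrη : Module.finrank ℚ ℚ⟮η⟯ = Nat.totient m := by
    rw [adjoin.finrank hintη, ← cyclotomic_eq_minpoly_rat hη (Nat.pos_of_ne_zero hm0),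
      natDegree_cyclotomic]
  -- the adjoin tower
  obtain ⟨u, v, huv⟩ : ∃ u v : ℤ, u * (m:ℤ) + v * ((p^k : ℕ):ℤ) = 1 := by
    have : IsCoprime ((m:ℕ):ℤ) (((p^k:ℕ)):ℤ) := Nat.isCoprime_iff_coprime.mpr hcop.symm
    obtain ⟨a, b, hab⟩ := this
    exact ⟨a, b, hab⟩
  have hωmem : ω ∈ ℚ⟮η, ζ₁⟯ := by
    have h1 : η ∈ ℚ⟮η, ζ₁⟯ := subset_adjoin ℚ _ (by simp)
    have h2 : ζ₁ ∈ ℚ⟮η, ζ₁⟯ := subset_adjoin ℚ _ (by simp)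
    have : ω = ζ₁ ^ u * η ^ v := by
      rw [hζdef, hηdef, ← zpow_natCast ω m, ← zpow_natCast ω (p^k), ← zpow_mul, ← zpow_mul,
        ← zpow_add₀ hω0, mul_comm (m:ℤ) u, mul_comm ((p^k:ℕ):ℤ) v, huv, zpow_one]
    rw [this]
    exact mul_mem (zpow_mem h2 u) (zpow_mem h1 v)
  have hadj : ℚ⟮η, ζ₁⟯ = ℚ⟮ω⟯ := by
    apply le_antisymm
    · rw [adjoin_le_iff]
      rintro x hx
      simp only [Set.mem_insert_iff, Set.mem_singleton_iff] at hx
      rcases hx with rfl | rfl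
      · exact pow_mem (mem_adjoin_simple_self ℚ ω) _
      · exact pow_mem (mem_adjoin_simple_self ℚ ω) _
    · rw [adjoin_le_iff]
      rintro x hx
      simp only [Set.mem_singleton_iff] at hx
      subst hx
      exact hωmem
  have hrs : restrictScalars ℚ (ℚ⟮η⟯⟮ζ₁⟯) = ℚ⟮ω⟯ := by
    exact (adjoin_simple_adjoin_simple (F := ℚ) (α := η) ζ₁).trans hadj
  have hintζK : IsIntegral ℚ⟮η⟯ ζ₁ := by
    refine ⟨X ^ (p^k) - 1, monic_X_pow_sub_C 1 hpk0, ?_⟩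
    simp [eval₂_sub, hζ₁.pow_eq_one]
  have _fd : FiniteDimensional ℚ⟮η⟯ (ℚ⟮η⟯⟮ζ₁⟯) := adjoin.finiteDimensional hintζK
  have htower : Module.finrank ℚ ℚ⟮η⟯ * Module.finrank ℚ⟮η⟯ (ℚ⟮η⟯⟮ζ₁⟯) =
      Module.finrank ℚ ℚ⟮ω⟯ := by
    rw [← hrs]
    exact Module.finrank_mul_finrank ℚ ℚ⟮η⟯ (ℚ⟮η⟯⟮ζ₁⟯)
  have hfr1 : Module.finrank ℚ⟮η⟯ (ℚ⟮η⟯⟮ζ₁⟯) = Nat.totient (p ^ k) := by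
    have h1 : Module.finrank ℚ ℚ⟮η⟯ * Module.finrank ℚ⟮η⟯ (ℚ⟮η⟯⟮ζ₁⟯)
        = Nat.totient (p^k) * Nat.totient m := by
      rw [htower, hfrω, hs, Nat.totient_mul hcop]
    rw [hfrη] at h1
    have hmpos : 0 < Nat.totient m := Nat.totient_pos.mpr (Nat.pos_of_ne_zero hm0)
    rw [mul_comm (Nat.totient (p^k)) (Nat.totient m)] at h1
    exact Nat.eq_of_mul_eq_mul_left hmpos h1
  have hdeg : (minpoly ℚ⟮η⟯ ζ₁).natDegree = Nat.totient (p ^ k) := by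
    rw [← adjoin.finrank hintζK, hfr1]
  have hdvd : minpoly ℚ⟮η⟯ ζ₁ ∣ cyclotomic (p ^ k) ℚ⟮η⟯ := by
    apply minpoly.dvd
    rw [aeval_def, eval₂_eq_eval_map, map_cyclotomic]
    exact hζ₁.isRoot_cyclotomic (Nat.pos_of_ne_zero hpk0)
  -- monic + dvd + same degree ⟹ equal
  obtain ⟨c, hc⟩ := hdvd
  have hmono : (minpoly ℚ⟮η⟯ ζ₁).Monic := minpoly.monic hintζK
  have hcyc : (cyclotomic (p ^ k) ℚ⟮η⟯).Monic := cyclotomic.monic _ _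
  have hc0 : c ≠ 0 := by
    rintro rfl
    rw [mul_zero] at hc
    exact (cyclotomic_ne_zero (p^k) ℚ⟮η⟯) hc
  have hdegc : c.natDegree = 0 := by
    have := natDegree_mul hmono.ne_zero hc0
    rw [← hc, natDegree_cyclotomic, hdeg] at this
    omega
  have hcC : c = C (c.coeff 0) := eq_C_of_natDegree_eq_zero hdegc
  have hlc : c.coeff 0 = 1 := by
    have := hcyc.leadingCoeff
    rw [hc, leadingCoeff_mul, hmono.leadingCoeff, one_mul] at this
    rw [← this, leadingCoeff, hdegc]
  rw [hc, hcC, hlc, map_one, mul_one]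

lemma keyA (F : Finset ℤ) (h0 : (0:ℤ) ∈ F) (s : ℕ) (hs0 : s ≠ 0) (ω : ℂ)
    (hω : IsPrimitiveRoot ω s) (hsum : ∑ f ∈ F, ω ^ (f:ℤ) = 0)
    (p : ℕ) (hp : p.Prime) (hk1 : 1 ≤ s.factorization p) :
    (∃ f ∈ F, f ≠ 0 ∧ ((p:ℤ))^(s.factorization p - 1) ∣ f) ∧
    (F.card < p → ∃ f ∈ F, f ≠ 0 ∧ ((p:ℤ))^(s.factorization p) ∣ f) := by
  classical
  set k := s.factorization p with hkdef
  set m := s / p ^ k with hmdef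
  have hs : s = p ^ k * m := (Nat.ordProj_mul_ordCompl_eq_self s p).symm
  have hm : ¬ p ∣ m := Nat.not_dvd_ordCompl hp hs0
  have hm0 : m ≠ 0 := by rintro h; rw [h, mul_zero] at hs; exact hs0 hs
  have hpk0 : p ^ k ≠ 0 := pow_ne_zero _ hp.pos.ne'
  have hpkpos : (0:ℤ) < ((p ^ k : ℕ) : ℤ) := by exact_mod_cast Nat.pos_of_ne_zero hpk0
  have hspos : 0 < s := Nat.pos_of_ne_zero hs0
  have hω0 : ω ≠ 0 := hω.ne_zero hs0
  have hζ₁ : IsPrimitiveRoot (ω ^ m) (p ^ k) := hω.pow hspos (by rw [hs, mul_comm])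
  have hη : IsPrimitiveRoot (ω ^ (p ^ k)) m := hω.pow hspos hs
  set η : ℂ := ω ^ (p ^ k) with hηdef
  set ζ₁ : ℂ := ω ^ m with hζdef
  have hη0 : η ≠ 0 := pow_ne_zero _ hω0
  have hζ0 : ζ₁ ≠ 0 := pow_ne_zero _ hω0
  have hcop : Nat.Coprime (p ^ k) m := (Nat.Prime.coprime_iff_not_dvd hp).mpr hm |>.pow_left _
  obtain ⟨u, v, huv⟩ : ∃ u v : ℤ, u * (m:ℤ) + v * ((p^k : ℕ):ℤ) = 1 := by
    have : IsCoprime ((m:ℕ):ℤ) (((p^k:ℕ)):ℤ) := Nat.isCoprime_iff_coprime.mpr hcop.symm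
    obtain ⟨a, b, hab⟩ := this
    exact ⟨a, b, hab⟩
  have hcop2 : IsCoprime (((p^k:ℕ)):ℤ) u := ⟨v, (m:ℤ), by linarith [huv]⟩
  -- the field K = ℚ(η) and ηK
  set K := ℚ⟮η⟯ with hKdef
  set ηK : K := ⟨η, mem_adjoin_simple_self ℚ η⟩ with hηKdef
  have hηK0 : ηK ≠ 0 := by
    intro h
    apply hη0
    have := congrArg (Subtype.val) h
    simpa [hηKdef] using this
  -- the polynomial P
  set eN : ℤ → ℕ := fun f => ((u*f) % (((p^k:ℕ)):ℤ)).toNat with heNdef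
  have heN_lt : ∀ f : ℤ, eN f < p ^ k := by
    intro f
    have h1 := Int.emod_nonneg (u*f) hpkpos.ne'
    have h2 := Int.emod_lt_of_pos (u*f) hpkpos
    simp only [heNdef]
    omega
  have heN0 : eN 0 = 0 := by simp [heNdef]
  set P : Polynomial K := ∑ f ∈ F, Polynomial.C (ηK ^ (v*f)) * X ^ (eN f) with hPdef
  have hcoeff : ∀ e : ℕ, P.coeff e = ∑ f ∈ F.filter (fun f => eN f = e), ηK ^ (v*f) := by
    intro e
    rw [hPdef, finset_sum_coeff]
    rw [Finset.sum_filter]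
    apply Finset.sum_congr rfl
    intro f _
    rw [coeff_C_mul_X_pow]
    simp only [eq_comm]
  -- evaluation facts
  have hζpk : ζ₁ ^ (((p^k:ℕ)):ℤ) = 1 := by
    rw [zpow_natCast]; exact hζ₁.pow_eq_one
  have hzeta_eN : ∀ f : ℤ, (ζ₁ : ℂ) ^ (eN f) = ζ₁ ^ (u * f) := by
    intro f
    have h1 : ((eN f : ℕ) : ℤ) = (u*f) % ((p^k:ℕ):ℤ) :=
      Int.toNat_of_nonneg (Int.emod_nonneg _ hpkpos.ne')
    calc ζ₁ ^ (eN f) = ζ₁ ^ ((eN f : ℕ) : ℤ) := (zpow_natCast _ _).symm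
      _ = ζ₁ ^ ((u*f) % ((p^k:ℕ):ℤ)) := by rw [h1]
      _ = ζ₁ ^ ((u*f) % ((p^k:ℕ):ℤ)) * (ζ₁ ^ (((p^k:ℕ)):ℤ)) ^ ((u*f) / ((p^k:ℕ):ℤ)) := by
          rw [hζpk, one_zpow, mul_one]
      _ = ζ₁ ^ ((u*f) % ((p^k:ℕ):ℤ) + ((p^k:ℕ):ℤ) * ((u*f) / ((p^k:ℕ):ℤ))) := by
          rw [← zpow_mul, ← zpow_add₀ hζ0]
      _ = ζ₁ ^ (u*f) := by rw [Int.emod_add_mul_ediv]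
  have hfactor : ∀ f : ℤ, η ^ (v*f) * ζ₁ ^ (u*f) = ω ^ (f:ℤ) := by
    intro f
    rw [hηdef, hζdef, ← zpow_natCast ω (p^k), ← zpow_natCast ω m, ← zpow_mul, ← zpow_mul,
      ← zpow_add₀ hω0]
    congr 1
    calc ((p^k:ℕ):ℤ) * (v*f) + (m:ℤ) * (u*f) = (u * (m:ℤ) + v * ((p^k:ℕ):ℤ)) * f := by ring
      _ = f := by rw [huv, one_mul]
  have haev : Polynomial.aeval ζ₁ P = 0 := by
    rw [hPdef, map_sum]
    have hterm : ∀ f ∈ F, Polynomial.aeval ζ₁ (Polynomial.C (ηK ^ (v*f)) * X ^ (eN f))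
        = ω ^ (f:ℤ) := by
      intro f _
      rw [map_mul, aeval_C, map_pow, aeval_X]
      have h2 : (algebraMap K ℂ) (ηK ^ (v*f)) = η ^ (v*f) := by
        rw [map_zpow₀]; rfl
      rw [h2, hzeta_eN f, hfactor]
    rw [Finset.sum_congr rfl hterm, hsum]
  have hmp : minpoly K ζ₁ = cyclotomic (p^k) K := by
    rw [hKdef, hηdef, hζdef]
    exact minpoly_eq_cyclo s p k m hp hs hm hs0 ω hω
  have hdvdP : cyclotomic (p^k) K ∣ P := by
    rw [← hmp]; exact minpoly.dvd K ζ₁ haev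
  obtain ⟨G, hG⟩ := hdvdP
  by_cases hc0 : P.coeff 0 = 0
  · -- class of 0 vanishes: get f ≠ 0 with p^k ∣ f
    have hfilter : ∑ f ∈ F.filter (fun f => eN f = 0), ηK ^ (v*f) = 0 := by
      rw [← hcoeff 0, hc0]
    have h0mem : (0:ℤ) ∈ F.filter (fun f => eN f = 0) := Finset.mem_filter.mpr ⟨h0, heN0⟩
    have hex : ∃ f ∈ F.filter (fun f => eN f = 0), f ≠ 0 := by
      by_contra h
      push_neg at h
      have hsing : F.filter (fun f => eN f = 0) = {0} :=
        Finset.eq_singleton_iff_unique_mem.mpr ⟨h0mem, fun x hx => h x hx⟩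
      rw [hsing] at hfilter
      simp at hfilter
    obtain ⟨f, hfmem, hf0⟩ := hex
    obtain ⟨hfF, heNf⟩ := Finset.mem_filter.mp hfmem
    have hdvd : ((p^k:ℕ):ℤ) ∣ u * f := by
      apply Int.dvd_of_emod_eq_zero
      have h1 := Int.emod_nonneg (u*f) hpkpos.ne'
      simp only [heNdef] at heNf
      omega
    have hf : ((p^k:ℕ):ℤ) ∣ f := hcop2.dvd_of_dvd_mul_left hdvd
    have hf' : ((p:ℤ))^k ∣ f := by exact_mod_cast hf
    exact ⟨⟨f, hfF, hf0, (pow_dvd_pow _ (Nat.sub_le k 1)).trans hf'⟩,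
      fun _ => ⟨f, hfF, hf0, hf'⟩⟩
  · -- coefficient 0 nonzero: p nonempty classes
    have hPne : P ≠ 0 := fun h => hc0 (by rw [h]; simp)
    have hGne : G ≠ 0 := by rintro rfl; rw [mul_zero] at hG; exact hPne hG
    have hx : 0 < p^(k-1) := pow_pos hp.pos _
    have hcycdeg : (cyclotomic (p^k) K).natDegree = p^(k-1) * (p-1) := by
      rw [natDegree_cyclotomic, Nat.totient_prime_pow hp (by omega : 0 < k)]
    have hPdeg : P.natDegree ≤ p^k - 1 := by
      rw [hPdef]
      apply natDegree_sum_le_of_forall_le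
      intro f _
      refine natDegree_mul_le.trans ?_
      have h1 := heN_lt f
      simp only [natDegree_C, natDegree_X_pow, zero_add]
      omega
    have hGdeg : G.natDegree < p^(k-1) := by
      have h1 : P.natDegree = (cyclotomic (p^k) K).natDegree + G.natDegree := by
        rw [hG, natDegree_mul (cyclotomic_ne_zero _ K) hGne]
      rw [hcycdeg] at h1
      have hpk_eq : p^k = p^(k-1) * p := by
        rw [← pow_succ]; congr 1; omega
      have hdist : p^(k-1)*(p-1) = p^(k-1)*p - p^(k-1) := by
        rw [Nat.mul_sub, mul_one]
      have hxy : p^(k-1) ≤ p^(k-1)*p := Nat.le_mul_of_pos_right _ hp.pos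
      omega
    have hkey : ∀ i, i < p → P.coeff (i * p^(k-1)) = G.coeff 0 := by
      intro i hip
      have hcyc_eq : cyclotomic (p^k) K = ∑ j ∈ Finset.range p, X ^ (p^(k-1) * j) := by
        have hk' : k = (k-1) + 1 := by omega
        rw [hk', cyclotomic_prime_pow_eq_geom_sum hp]
        refine Finset.sum_congr rfl fun j _ => by
          rw [← pow_mul]
          congr 2
      have hPsum : P = ∑ j ∈ Finset.range p, X ^ (p^(k-1)*j) * G := by
        rw [hG, hcyc_eq, Finset.sum_mul]
      rw [hPsum, finset_sum_coeff]
      rw [Finset.sum_eq_single i]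
      · rw [mul_comm (X ^ (p^(k-1)*i)) G, coeff_mul_X_pow']
        rw [if_pos (by rw [mul_comm])]
        rw [mul_comm i (p^(k-1)), Nat.sub_self]
      · intro j hj hji
        rw [mul_comm (X ^ (p^(k-1)*j)) G, coeff_mul_X_pow']
        by_cases h : p^(k-1)*j ≤ i*p^(k-1)
        · rw [if_pos h]
          apply coeff_eq_zero_of_natDegree_lt
          have hji' : j < i := by
            rcases Nat.lt_or_ge j i with h' | h'
            · exact h'
            · exfalso
              apply hji
              have : i ≤ j := h'
              have h2 : i * p^(k-1) ≤ j * p^(k-1) := Nat.mul_le_mul_right _ this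
              rw [mul_comm (p^(k-1)) j] at h
              have : i * p^(k-1) = j * p^(k-1) := le_antisymm h2 h
              exact (Nat.eq_of_mul_eq_mul_right hx this).symm
          have hsub : i*p^(k-1) - p^(k-1)*j = (i - j) * p^(k-1) := by
            rw [mul_comm (p^(k-1)) j, ← Nat.sub_mul]
          rw [hsub]
          calc G.natDegree < p^(k-1) := hGdeg
            _ ≤ (i - j) * p^(k-1) := Nat.le_mul_of_pos_left _ (by omega)
        · rw [if_neg h]
      · intro h
        exact absurd (Finset.mem_range.mpr hip) h
    have h00 : P.coeff 0 = G.coeff 0 := by simpa using hkey 0 hp.pos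
    have hpart1 : ∃ f ∈ F, f ≠ 0 ∧ ((p:ℤ))^(k-1) ∣ f := by
      have h1 : P.coeff (1 * p^(k-1)) = G.coeff 0 := hkey 1 hp.one_lt
      have hne : P.coeff (p^(k-1)) ≠ 0 := by
        rw [one_mul] at h1; rw [h1, ← h00]; exact hc0
      rw [hcoeff] at hne
      obtain ⟨f, hfmem, -⟩ := Finset.exists_ne_zero_of_sum_ne_zero hne
      obtain ⟨hfF, heNf⟩ := Finset.mem_filter.mp hfmem
      have hdvd2 : ((p^(k-1):ℕ):ℤ) ∣ ((p^k:ℕ):ℤ) :=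
        Int.natCast_dvd_natCast.mpr (pow_dvd_pow p (Nat.sub_le k 1))
      have hmod : (u*f) % ((p^k:ℕ):ℤ) = ((p^(k-1):ℕ):ℤ) := by
        have h2 := Int.emod_nonneg (u*f) hpkpos.ne'
        simp only [heNdef] at heNf
        omega
      have hdvd1 : ((p^(k-1):ℕ):ℤ) ∣ u * f := by
        have h3 := Int.emod_add_mul_ediv (u*f) ((p^k:ℕ):ℤ)
        rw [← h3]
        exact dvd_add (by rw [hmod]) (hdvd2.mul_right _)
      have hcop3 : IsCoprime ((p^(k-1):ℕ):ℤ) u := hcop2.of_isCoprime_of_dvd_left hdvd2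
      have hf : ((p^(k-1):ℕ):ℤ) ∣ f := hcop3.dvd_of_dvd_mul_left hdvd1
      have hfne : f ≠ 0 := by
        rintro rfl
        rw [heN0] at heNf
        omega
      exact ⟨f, hfF, hfne, by exact_mod_cast hf⟩
    have hpart2 : p ≤ F.card := by
      have hne : ∀ i ∈ Finset.range p, (F.filter (fun f => eN f = i * p^(k-1))).Nonempty := by
        intro i hi
        have h1 : P.coeff (i * p^(k-1)) = G.coeff 0 := hkey i (Finset.mem_range.mp hi)
        have h2 : P.coeff (i*p^(k-1)) ≠ 0 := by rw [h1, ← h00]; exact hc0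
        rw [hcoeff] at h2
        obtain ⟨f, hf, -⟩ := Finset.exists_ne_zero_of_sum_ne_zero h2
        exact ⟨f, hf⟩
      set g : ℕ → ℤ := fun i =>
        if h : (F.filter (fun f => eN f = i * p^(k-1))).Nonempty then h.choose else 0 with hgdef
      have hg : ∀ i ∈ Finset.range p, g i ∈ F ∧ eN (g i) = i * p^(k-1) := by
        intro i hi
        have h := hne i hi
        simp only [hgdef, dif_pos h]
        exact Finset.mem_filter.mp h.choose_spec
      have hcard := Finset.card_le_card_of_injOn g (fun i hi => (hg i hi).1) ?_
      · simpa using hcard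
      · intro i hi j hj hij
        simp only [Finset.coe_range, Set.mem_Iio] at hi hj
        have h1 := (hg i (Finset.mem_range.mpr hi)).2
        have h2 := (hg j (Finset.mem_range.mpr hj)).2
        rw [hij, h2] at h1
        exact (Nat.eq_of_mul_eq_mul_right hx h1).symm
    exact ⟨hpart1, fun hlt => absurd hpart2 (by omega)⟩

lemma key_dvd (F : Finset ℤ) (h0 : (0:ℤ) ∈ F) (ℓ q n : ℕ) (hℓ : 1 ≤ ℓ)
    (hq : q = Nat.lcm ℓ (∏ p ∈ (Finset.range (2 * F.card + 1)).filter Nat.Prime, p))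
    (hn : n = (F.erase 0).lcm (fun f => f.natAbs))
    (s : ℕ) (hs0 : s ≠ 0) (ω : ℂ) (hω : IsPrimitiveRoot ω s)
    (hsum : ∑ f ∈ F, ω ^ (f:ℤ) = 0) : s ∣ q * n := by
  have hn0 : n ≠ 0 := by
    rw [hn]
    intro h
    rw [Finset.lcm_eq_zero_iff] at h
    obtain ⟨f, hf, hf0⟩ := h
    replace hf : f ∈ F ∧ f ∉ ({0} : Set ℤ) := by
      simp only [Finset.mem_coe, Finset.mem_erase] at hf; exact ⟨hf.2, hf.1⟩
    have : f = 0 := Int.natAbs_eq_zero.mp hf0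
    rcases hf with ⟨-, hne⟩
    exact hne (by simpa [this])
  have hP0 : (∏ p ∈ (Finset.range (2 * F.card + 1)).filter Nat.Prime, p) ≠ 0 := by
    rw [Finset.prod_ne_zero_iff]
    intro p hp
    exact ((Finset.mem_filter.mp hp).2).pos.ne'
  have hq0 : q ≠ 0 := by rw [hq]; exact Nat.lcm_ne_zero (by omega) hP0
  rw [← Nat.factorization_le_iff_dvd hs0 (mul_ne_zero hq0 hn0), Finsupp.le_def]
  intro p
  by_cases hpp : p.Prime
  swap
  · simp [Nat.factorization_eq_zero_of_not_prime _ hpp]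
  by_cases hk0 : s.factorization p = 0
  · simp [hk0]
  have hk1 : 1 ≤ s.factorization p := by omega
  set k := s.factorization p with hkdef
  obtain ⟨part1, part2⟩ := keyA F h0 s hs0 ω hω hsum p hpp hk1
  have hmulfact : (q*n).factorization p = q.factorization p + n.factorization p := by
    rw [Nat.factorization_mul hq0 hn0]; rfl
  have hnfact : ∀ j : ℕ, (∃ f ∈ F, f ≠ 0 ∧ ((p:ℤ))^j ∣ f) → j ≤ n.factorization p := by
    rintro j ⟨f, hfF, hfne, hdvd⟩
    have h2 : p^j ∣ f.natAbs := by
      have h := Int.natAbs_dvd_natAbs.mpr hdvd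
      rwa [Int.natAbs_pow, Int.natAbs_natCast] at h
    have h3 : p^j ∣ n := dvd_trans h2
      (by rw [hn]; exact Finset.dvd_lcm (Finset.mem_erase.mpr ⟨hfne, hfF⟩))
    exact (Nat.Prime.pow_dvd_iff_le_factorization hpp hn0).mp h3
  rcases le_or_gt p F.card with hple | hlt
  · have h3 := hnfact (k-1) part1
    have h4 : 1 ≤ q.factorization p := by
      apply hpp.factorization_pos_of_dvd hq0
      calc p ∣ (∏ p ∈ (Finset.range (2 * F.card + 1)).filter Nat.Prime, p) :=
            Finset.dvd_prod_of_mem _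
              (Finset.mem_filter.mpr ⟨Finset.mem_range.mpr (by omega), hpp⟩)
        _ ∣ q := hq ▸ Nat.dvd_lcm_right _ _
    rw [hmulfact]
    omega
  · have h3 := hnfact k (part2 hlt)
    rw [hmulfact]
    omega

lemma per_ext {α : Type*} (e : ℤ → α) (T : ℕ) (he : ∀ x, e (x + T) = e x) :
    ∀ (x k : ℤ), e (x + k * T) = e x := by
  intro x k
  induction k using Int.induction_on with
  | zero => simp
  | succ k ih =>
      have h1 : x + ((k:ℤ) + 1) * T = (x + k * T) + T := by ring
      rw [h1, he, ih]
  | pred k ih =>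
      have h1 : x + (-(k:ℤ) - 1) * T + T = x + (-(k:ℤ)) * T := by ring
      have := he (x + (-(k:ℤ) - 1) * T)
      rw [h1] at this
      rw [← this]
      exact ih

lemma shift_one_sum (T : ℕ) (g : ℤ → ℂ) (hg : ∀ x : ℤ, g (x + T) = g x) :
    ∑ x ∈ Finset.range T, g (x + 1) = ∑ x ∈ Finset.range T, g x := by
  have h1 := Finset.sum_range_succ' (fun i : ℕ => g i) T
  have h2 := Finset.sum_range_succ (fun i : ℕ => g i) T
  have h3 : g ((T : ℕ) : ℤ) = g 0 := by
    have := hg 0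
    rwa [zero_add] at this
  have h4 : ∑ x ∈ Finset.range T, g ((x : ℤ) + 1) = ∑ x ∈ Finset.range T, g ((x + 1 : ℕ) : ℤ) := by
    apply Finset.sum_congr rfl
    intro i _
    norm_cast
  rw [h4]
  have := h1.symm.trans h2
  -- ∑_{x<T} g (x+1) + g 0 = ∑_{x<T} g x + g T
  rw [h3] at this
  exact add_right_cancel this

lemma periodic_shift_sum (T : ℕ) (g : ℤ → ℂ) (hg : ∀ x : ℤ, g (x + T) = g x) :
    ∀ c : ℤ, ∑ x ∈ Finset.range T, g (x + c) = ∑ x ∈ Finset.range T, g x := by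
  intro c
  induction c using Int.induction_on with
  | zero => simp
  | succ c ih =>
      have h1 := shift_one_sum T (fun x => g (x + c)) (fun x => by
        beta_reduce
        have h2 : x + (T:ℤ) + c = (x + c) + T := by ring
        rw [h2, hg])
      beta_reduce at h1
      have h2 : ∑ x ∈ Finset.range T, g ((x:ℤ) + ((c:ℤ) + 1)) =
          ∑ x ∈ Finset.range T, g ((x:ℤ) + 1 + c) := by
        apply Finset.sum_congr rfl
        intro i _
        congr 1
        ring
      rw [h2, h1, ih]
  | pred c ih =>
      have h1 := shift_one_sum T (fun x => g (x + (-(c:ℤ) - 1))) (fun x => by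
        beta_reduce
        have h2 : x + (T:ℤ) + (-(c:ℤ) - 1) = (x + (-(c:ℤ) - 1)) + T := by ring
        rw [h2, hg])
      beta_reduce at h1
      have h2 : ∑ x ∈ Finset.range T, g ((x:ℤ) + 1 + (-(c:ℤ) - 1)) =
          ∑ x ∈ Finset.range T, g ((x:ℤ) + (-(c:ℤ))) := by
        apply Finset.sum_congr rfl
        intro i _
        congr 1
        ring
      rw [h2, ih] at h1
      exact h1.symm

lemma exists_period (F : Finset ℤ) (hF : F.Nonempty) (b : ℤ → ℤ)
    (hval : ∀ x, b x = -1 ∨ b x = 0 ∨ b x = 1)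
    (hb : ∀ x : ℤ, ∑ f ∈ F, b (x - f) = 0) :
    ∃ T : ℕ, 1 ≤ T ∧ ∀ x, b (x + T) = b x := by
  classical
  set mn := F.min' hF with hmndef
  set mx := F.max' hF with hmxdef
  have hmnmx : mn ≤ mx := F.min'_le _ (F.max'_mem hF)
  set d : ℕ := (mx - mn).toNat with hddef
  have hdcast : (d:ℤ) = mx - mn := Int.toNat_of_nonneg (by omega)
  have hrecF : ∀ y : ℤ, b y = -∑ f ∈ F.erase mn, b (y + mn - f) := by
    intro y
    have h1 := hb (y + mn)
    rw [← Finset.add_sum_erase F _ (F.min'_mem hF)] at h1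
    have h2 : y + mn - mn = y := by ring
    rw [h2] at h1
    linarith [h1]
  have hrecB : ∀ y : ℤ, b y = -∑ f ∈ F.erase mx, b (y + mx - f) := by
    intro y
    have h1 := hb (y + mx)
    rw [← Finset.add_sum_erase F _ (F.max'_mem hF)] at h1
    have h2 : y + mx - mx = y := by ring
    rw [h2] at h1
    linarith [h1]
  have det : ∀ (u : ℤ) (T : ℤ), 0 < T →
      (∀ i : ℕ, i < d → b (u + i) = b (u + i + T)) → ∀ z : ℤ, b z = b (z + T) := by
    intro u T hTpos hwin
    have hfwd : ∀ t : ℕ, b (u + t) = b (u + t + T) := by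
      intro t
      induction t using Nat.strong_induction_on with
      | _ t ih =>
        by_cases htd : t < d
        · exact hwin t htd
        · push_neg at htd
          rw [hrecF (u + t), hrecF (u + t + T)]
          congr 1
          apply Finset.sum_congr rfl
          intro f hf
          obtain ⟨hfne, hfF⟩ := Finset.mem_erase.mp hf
          have hflb : mn < f := lt_of_le_of_ne (F.min'_le f hfF) (Ne.symm hfne)
          have hfub : f ≤ mx := F.le_max' f hfF
          set t' : ℤ := (t:ℤ) + mn - f with ht'def
          have ht'0 : 0 ≤ t' := by omega
          have ht'lt : t'.toNat < t := by omega
          have h5 : u + t + mn - f = u + (t'.toNat : ℤ) := by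
            rw [Int.toNat_of_nonneg ht'0, ht'def]; ring
          have h6 : u + t + T + mn - f = u + (t'.toNat : ℤ) + T := by
            rw [Int.toNat_of_nonneg ht'0, ht'def]; ring
          rw [h5, h6]
          exact ih _ ht'lt
    have hbwd : ∀ t : ℕ, b (u - 1 - t) = b (u - 1 - t + T) := by
      intro t
      induction t using Nat.strong_induction_on with
      | _ t ih =>
        rw [hrecB (u - 1 - t), hrecB (u - 1 - t + T)]
        congr 1
        apply Finset.sum_congr rfl
        intro f hf
        obtain ⟨hfne, hfF⟩ := Finset.mem_erase.mp hf
        have hfub : f < mx := lt_of_le_of_ne (F.le_max' f hfF) hfne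
        have hflb : mn ≤ f := F.min'_le f hfF
        by_cases hcase : (t:ℤ) < mx - f
        · set w : ℤ := (mx - f) - 1 - t with hwdef
          have hw0 : 0 ≤ w := by omega
          have h5 : u - 1 - t + mx - f = u + (w.toNat : ℤ) := by
            rw [Int.toNat_of_nonneg hw0, hwdef]; ring
          have h6 : u - 1 - t + T + mx - f = u + (w.toNat : ℤ) + T := by
            rw [Int.toNat_of_nonneg hw0, hwdef]; ring
          rw [h5, h6]
          exact hfwd w.toNat
        · push_neg at hcase
          set w : ℤ := (t:ℤ) - (mx - f) with hwdef
          have hw0 : 0 ≤ w := by omega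
          have hwlt : w.toNat < t := by omega
          have h5 : u - 1 - t + mx - f = u - 1 - (w.toNat : ℤ) := by
            rw [Int.toNat_of_nonneg hw0, hwdef]; ring
          have h6 : u - 1 - t + T + mx - f = u - 1 - (w.toNat : ℤ) + T := by
            rw [Int.toNat_of_nonneg hw0, hwdef]; ring
          rw [h5, h6]
          exact ih _ hwlt
    intro z
    rcases le_or_gt u z with hz | hz
    · have h5 : z = u + ((z - u).toNat : ℤ) := by
        rw [Int.toNat_of_nonneg (by omega)]; ring
      rw [h5]; exact hfwd _
    · have h5 : z = u - 1 - ((u - 1 - z).toNat : ℤ) := by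
        rw [Int.toNat_of_nonneg (by omega)]; ring
      rw [h5]; exact hbwd _
  set W : ℕ → (Fin d → ℤ) := fun x => fun i => b ((x:ℤ) + i) with hWdef
  have hmaps : ∀ x ∈ Finset.range (3^d + 1),
      W x ∈ Fintype.piFinset (fun _ : Fin d => ({-1,0,1} : Finset ℤ)) := by
    intro x _
    rw [Fintype.mem_piFinset]
    intro i
    rcases hval ((x:ℤ) + i) with h | h | h <;> simp [hWdef, h]
  have hcard3 : (({-1,0,1} : Finset ℤ)).card = 3 := by norm_num
  have hcard : (Fintype.piFinset (fun _ : Fin d => ({-1,0,1} : Finset ℤ))).card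
      < (Finset.range (3^d+1)).card := by
    rw [Fintype.card_piFinset, Finset.card_range]
    simp only [hcard3, Finset.prod_const, Finset.card_univ, Fintype.card_fin]
    omega
  obtain ⟨x, hx, y, hy, hxy, hWeq⟩ := Finset.exists_ne_map_eq_of_card_lt_of_maps_to hcard hmaps
  have main : ∀ x y : ℕ, x < y → W x = W y → ∃ T:ℕ, 1 ≤ T ∧ ∀ z, b (z + T) = b z := by
    intro x y hlt hEq
    refine ⟨y - x, by omega, ?_⟩
    have hc : ((y - x : ℕ) : ℤ) = (y:ℤ) - x := by
      rw [Nat.cast_sub hlt.le]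
    have hTpos : (0:ℤ) < ((y - x : ℕ) : ℤ) := by omega
    have hwin : ∀ i : ℕ, i < d → b ((x:ℤ) + i) = b ((x:ℤ) + i + ((y-x:ℕ):ℤ)) := by
      intro i hi
      have h7 := congrFun hEq ⟨i, hi⟩
      simp only [hWdef] at h7
      rw [h7]
      congr 1
      rw [hc]
      ring
    have hdet := det (x:ℤ) ((y-x:ℕ):ℤ) hTpos hwin
    intro z
    exact (hdet z).symm
  rcases Nat.lt_or_ge x y with hlt | hge
  · exact main x y hlt hWeq
  · exact main y x (by omega) hWeq.symm

lemma step3 (F : Finset ℤ) (b : ℤ → ℤ) (hb : ∀ x : ℤ, ∑ f ∈ F, b (x - f) = 0)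
    (T : ℕ) (hT : 1 ≤ T) (hper : ∀ x, b (x + T) = b x)
    (N : ℕ) (hNkey : ∀ s : ℕ, s ≠ 0 → ∀ ω : ℂ, IsPrimitiveRoot ω s →
      (∑ f ∈ F, ω ^ (f:ℤ) = 0) → s ∣ N) :
    ∀ x : ℤ, b (x + N) = b x := by
  classical
  set e : ℤ → ℤ := fun x => b (x + N) - b x with hedef
  have heper : ∀ x, e (x + T) = e x := by
    intro x
    simp only [hedef]
    have h1 : x + (T:ℤ) + N = (x + N) + T := by ring
    rw [h1, hper, hper]
  suffices hzero : ∀ x : ℤ, e x = 0 by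
    intro x
    have h := hzero x
    simp only [hedef] at h
    linarith
  set Cpoly : Polynomial ℂ :=
    ∑ x ∈ Finset.range T, Polynomial.C ((e (x:ℤ) : ℤ) : ℂ) * Polynomial.X ^ x with hCdef
  have hroots : ∀ ω : ℂ, ω ^ T = 1 → Cpoly.eval ω = 0 := by
    intro ω hω1
    have hω0 : ω ≠ 0 := by
      intro h
      rw [h, zero_pow (by omega : T ≠ 0)] at hω1
      exact zero_ne_one hω1
    have hωTz : ω ^ ((T:ℕ):ℤ) = 1 := by rw [zpow_natCast]; exact hω1
    set g : ℤ → ℂ := fun x => (b x : ℂ) * ω ^ x with hgdef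
    have hgper : ∀ x, g (x + T) = g x := by
      intro x
      simp only [hgdef]
      rw [hper, zpow_add₀ hω0, hωTz, mul_one]
    set S : ℂ := ∑ x ∈ Finset.range T, g (x:ℤ) with hSdef
    have hshift := periodic_shift_sum T g hgper
    have heval : Cpoly.eval ω * ω ^ N = (1 - ω ^ N) * S := by
      rw [hCdef, Polynomial.eval_finset_sum, Finset.sum_mul]
      have h1 : ∀ x ∈ Finset.range T,
          Polynomial.eval ω (Polynomial.C ((e (x:ℤ):ℤ):ℂ) * Polynomial.X ^ x) * ω ^ N
          = g ((x:ℤ) + N) - ω ^ N * g (x:ℤ) := by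
        intro x _
        simp only [Polynomial.eval_mul, Polynomial.eval_C, Polynomial.eval_pow,
          Polynomial.eval_X, hgdef, hedef]
        rw [zpow_add₀ hω0, zpow_natCast, zpow_natCast]
        push_cast
        ring
      rw [Finset.sum_congr rfl h1, Finset.sum_sub_distrib, hshift (N:ℤ), ← Finset.mul_sum]
      ring
    by_cases hS : S = 0
    · rw [hS, mul_zero] at heval
      rcases mul_eq_zero.mp heval with h | h
      · exact h
      · exact absurd h (pow_ne_zero _ hω0)
    · have hFsum : ∑ f ∈ F, ω ^ (f:ℤ) = 0 := by
        have h0 : ∑ x ∈ Finset.range T, ((∑ f ∈ F, b ((x:ℤ) - f) : ℤ) : ℂ) * ω ^ (x:ℕ) = 0 := by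
          apply Finset.sum_eq_zero
          intro x _
          rw [hb (x:ℤ)]
          simp
        have h1 : ∀ x ∈ Finset.range T, ((∑ f ∈ F, b ((x:ℤ) - f) : ℤ) : ℂ) * ω ^ (x:ℕ)
            = ∑ f ∈ F, (b ((x:ℤ) - f) : ℂ) * ω ^ ((x:ℕ) : ℤ) := by
          intro x _
          push_cast
          rw [Finset.sum_mul]
          exact Finset.sum_congr rfl fun f _ => by rw [zpow_natCast]
        rw [Finset.sum_congr rfl h1, Finset.sum_comm] at h0
        have h2 : ∀ f ∈ F, ∑ x ∈ Finset.range T, (b ((x:ℤ) - f) : ℂ) * ω ^ ((x:ℕ) : ℤ)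
            = ω ^ (f:ℤ) * S := by
          intro f _
          have h3 : ∀ x ∈ Finset.range T, (b ((x:ℤ) - f) : ℂ) * ω ^ ((x:ℕ) : ℤ)
              = ω ^ (f:ℤ) * g ((x:ℤ) + (-f)) := by
            intro x _
            simp only [hgdef]
            have h4 : (x:ℤ) + (-f) = (x:ℤ) - f := by ring
            rw [h4, ← mul_assoc, mul_comm (ω ^ (f:ℤ)) _, mul_assoc, ← zpow_add₀ hω0]
            congr 2
            ring
          rw [Finset.sum_congr rfl h3, ← Finset.mul_sum, hshift (-(f:ℤ))]
        rw [Finset.sum_congr rfl h2, ← Finset.sum_mul] at h0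
        rcases mul_eq_zero.mp h0 with h | h
        · exact h
        · exact absurd h hS
      have hfin : IsOfFinOrder ω := isOfFinOrder_iff_pow_eq_one.mpr ⟨T, by omega, hω1⟩
      have hs0 : orderOf ω ≠ 0 := hfin.orderOf_pos.ne'
      have hdvd := hNkey (orderOf ω) hs0 ω (IsPrimitiveRoot.orderOf ω) hFsum
      have hωN : ω ^ N = 1 := orderOf_dvd_iff_pow_eq_one.mp hdvd
      rw [hωN, mul_one] at heval
      rw [heval]
      ring
  have hdeg : Cpoly.natDegree ≤ T - 1 := by
    rw [hCdef]
    apply Polynomial.natDegree_sum_le_of_forall_le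
    intro x hx
    refine Polynomial.natDegree_mul_le.trans ?_
    simp only [Polynomial.natDegree_C, Polynomial.natDegree_X_pow, zero_add]
    have := Finset.mem_range.mp hx
    omega
  have hC0 : Cpoly = 0 := by
    by_contra hne
    have hξ := Complex.isPrimitiveRoot_exp T (by omega)
    have hsub : Polynomial.nthRootsFinset T (1 : ℂ) ⊆ Cpoly.roots.toFinset := by
      intro ω hω
      rw [Multiset.mem_toFinset, Polynomial.mem_roots hne]
      exact hroots ω ((Polynomial.mem_nthRootsFinset (by omega) (1 : ℂ)).mp hω)
    have h1 : T ≤ Cpoly.roots.toFinset.card := by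
      rw [← hξ.card_nthRootsFinset]
      exact Finset.card_le_card hsub
    have h2 := Multiset.toFinset_card_le Cpoly.roots
    have h3 := Polynomial.card_roots' Cpoly
    omega
  have hval0 : ∀ x ∈ Finset.range T, e (x:ℤ) = 0 := by
    intro x hx
    have h1 : Cpoly.coeff x = ((e (x:ℤ) : ℤ):ℂ) := by
      rw [hCdef, Polynomial.finset_sum_coeff]
      rw [Finset.sum_congr rfl
        (fun y _ => by rw [Polynomial.coeff_C_mul_X_pow]), Finset.sum_ite_eq]
      rw [if_pos hx]
    rw [hC0, Polynomial.coeff_zero] at h1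
    exact_mod_cast h1.symm
  intro x
  have hext := per_ext e T heper
  have hx1 : e x = e (x % T) := by
    have h1 : x = (x % T) + (x / T) * T := by
      rw [mul_comm]
      exact (Int.emod_add_mul_ediv x T).symm
    calc e x = e ((x % T) + (x / T) * T) := by rw [← h1]
      _ = e (x % T) := hext _ _
  have hTne : ((T:ℕ):ℤ) ≠ 0 := by
    have : (0:ℤ) < T := by exact_mod_cast hT
    omega
  have hmem : (x % T).toNat ∈ Finset.range T := by
    have h1 := Int.emod_nonneg x hTne
    have h2 := Int.emod_lt_of_pos x (by omega : (0:ℤ) < (T:ℤ))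
    rw [Finset.mem_range]
    omega
  have h5 := hval0 _ hmem
  rw [Int.toNat_of_nonneg (Int.emod_nonneg x hTne)] at h5
  rw [hx1]
  exact h5

/-- Universal period of one-dimensional tiles: if `𝟙_F * 𝟙_A` is `ℓℤ`-periodic, `0 ∈ F`,
`q` is the lcm of `ℓ` and all primes `≤ 2|F|`, and `n` is the lcm of `|f|` over
`f ∈ F \ {0}`, then `A` is `qn·ℤ`-periodic. -/
theorem stmt_5 (F : Finset ℤ) (h0 : (0 : ℤ) ∈ F) (A : Set ℤ)
    (ℓ : ℕ) (hℓ : 1 ≤ ℓ)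
    (hper : ∀ x : ℤ, ∑ f ∈ F, A.indicator (1 : ℤ → ℤ) (x + (ℓ : ℤ) - f)
      = ∑ f ∈ F, A.indicator (1 : ℤ → ℤ) (x - f))
    (q : ℕ) (hq : q = Nat.lcm ℓ (∏ p ∈ (Finset.range (2 * F.card + 1)).filter Nat.Prime, p))
    (n : ℕ) (hn : n = (F.erase 0).lcm (fun f => f.natAbs)) :
    ∀ x : ℤ, x + (q * n : ℕ) ∈ A ↔ x ∈ A := by
  classical
  set a : ℤ → ℤ := fun x => A.indicator (1 : ℤ → ℤ) x with hadef
  have ha01 : ∀ x, a x = 0 ∨ a x = 1 := by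
    intro x
    by_cases h : x ∈ A
    · right; simp [hadef, Set.indicator_of_mem h]
    · left; simp [hadef, Set.indicator_of_notMem h]
  set b : ℤ → ℤ := fun x => a (x + ℓ) - a x with hbdef
  have hb : ∀ x : ℤ, ∑ f ∈ F, b (x - f) = 0 := by
    intro x
    simp only [hbdef]
    rw [Finset.sum_sub_distrib]
    have h1 : ∀ f ∈ F, a (x - f + ℓ) = a (x + (ℓ:ℤ) - f) := by
      intro f _
      congr 1
      ring
    rw [Finset.sum_congr rfl h1]
    have h2 := hper x
    simp only [hadef] at h2 ⊢
    omega
  have hval : ∀ x, b x = -1 ∨ b x = 0 ∨ b x = 1 := by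
    intro x
    rcases ha01 (x + ℓ) with h1 | h1 <;> rcases ha01 x with h2 | h2 <;>
      simp [hbdef, h1, h2]
  obtain ⟨T, hT1, hTper⟩ := exists_period F ⟨0, h0⟩ b hval hb
  have hN : ∀ x, b (x + ((q*n : ℕ) : ℤ)) = b x :=
    step3 F b hb T hT1 hTper (q*n)
      (fun s hs ω hω hsum => key_dvd F h0 ℓ q n hℓ hq hn s hs ω hω hsum)
  have hldvd : ℓ ∣ q * n := Dvd.dvd.mul_right (hq ▸ Nat.dvd_lcm_left _ _) n
  obtain ⟨r, hr⟩ := hldvd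
  have htel : ∀ (y : ℤ) (j : ℕ), a (y + (j:ℤ) * ℓ) = a y + ∑ i ∈ Finset.range j, b (y + (i:ℤ) * ℓ) := by
    intro y j
    induction j with
    | zero => simp
    | succ j ih =>
        rw [Finset.sum_range_succ, ← add_assoc, ← ih]
        have h1 : y + ((j:ℤ)+1) * ℓ = (y + (j:ℤ) * ℓ) + ℓ := by ring
        have h2 : ((j+1 : ℕ):ℤ) = (j:ℤ) + 1 := by push_cast; ring
        rw [h2, h1]
        simp only [hbdef]
        ring
  set σ : ℤ → ℤ := fun y => ∑ i ∈ Finset.range r, b (y + (i:ℤ) * ℓ) with hσdef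
  have hstep : ∀ y : ℤ, a (y + ((q*n:ℕ):ℤ)) = a y + σ y := by
    intro y
    have h1 := htel y r
    have h2 : ((r:ℤ)) * ℓ = ((q*n:ℕ):ℤ) := by
      rw [hr]
      push_cast
      ring
    rw [h2] at h1
    exact h1
  have hσper : ∀ y : ℤ, σ (y + ((q*n:ℕ):ℤ)) = σ y := by
    intro y
    simp only [hσdef]
    apply Finset.sum_congr rfl
    intro i _
    have h1 : y + ((q*n:ℕ):ℤ) + (i:ℤ) * ℓ = (y + (i:ℤ) * ℓ) + ((q*n:ℕ):ℤ) := by ring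
    rw [h1, hN]
  have hσiter : ∀ (y : ℤ) (k : ℕ), σ (y + (k:ℤ) * ((q*n:ℕ):ℤ)) = σ y := by
    intro y k
    induction k with
    | zero => simp
    | succ k ih =>
        have h4 : y + ((k:ℤ)+1) * ((q*n:ℕ):ℤ) = (y + (k:ℤ) * ((q*n:ℕ):ℤ)) + ((q*n:ℕ):ℤ) := by
          ring
        have h5 : ((k+1 : ℕ):ℤ) = (k:ℤ) + 1 := by push_cast; ring
        rw [h5, h4, hσper, ih]
  have hiter : ∀ (y : ℤ) (k : ℕ), a (y + (k:ℤ) * ((q*n:ℕ):ℤ)) = a y + (k:ℤ) * σ y := by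
    intro y k
    induction k with
    | zero => simp
    | succ k ih =>
        have h1 : y + ((k:ℤ)+1) * ((q*n:ℕ):ℤ) = (y + (k:ℤ) * ((q*n:ℕ):ℤ)) + ((q*n:ℕ):ℤ) := by
          ring
        have h2 : ((k+1 : ℕ):ℤ) = (k:ℤ) + 1 := by push_cast; ring
        rw [h2, h1, hstep, ih, hσiter]
        ring
  have hσ0 : ∀ y : ℤ, σ y = 0 := by
    intro y
    have h2 := hiter y 2
    have hc : ((2:ℕ):ℤ) = 2 := by norm_num
    rw [hc] at h2
    rcases ha01 (y + 2 * ((q*n:ℕ):ℤ)) with h3 | h3 <;> rcases ha01 y with h4 | h4 <;>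
      rw [h3, h4] at h2 <;> omega
  have hfin : ∀ y : ℤ, a (y + ((q*n:ℕ):ℤ)) = a y := by
    intro y
    rw [hstep, hσ0, add_zero]
  intro x
  have h := hfin x
  simp only [hadef] at h
  by_cases h1 : x + ((q*n:ℕ):ℤ) ∈ A <;> by_cases h2 : x ∈ A
  · exact ⟨fun _ => h2, fun _ => h1⟩
  · exfalso
    rw [Set.indicator_of_mem h1, Set.indicator_of_notMem h2] at h
    simp at h
  · exfalso
    rw [Set.indicator_of_notMem h1, Set.indicator_of_mem h2] at h
    simp at h
  · exact ⟨fun h3 => absurd h3 h1, fun h3 => absurd h3 h2⟩
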